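/- arXiv:1411.2681 — 2 statements merged into one kernel-verified Lean document; each statement's English description precedes it below -/
import Mathlib

section
/- If fₙ is a sequence of nonnegative bounded USC functions on [0,1] whose hypographs H_{fₙ} converge in the Hausdorff metric to a compact set C ⊆ ℝ², then there exists a nonnegative USC function f : [0,1] → [0,∞) such that C = H_f; explicitly, f(x) = sup over sequences xₙ → x of limsup fₙ(xₙ). -/
open Set Metric Filter

def hypo (f : ℝ → ℝ) : Set (EuclideanSpace ℝ (Fin 2)) :=
  {p | p 0 ∈ Set.Icc (0:ℝ) 1 ∧ 0 ≤ p 1 ∧ p 1 ≤ f (p 0)}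

noncomputable def mk2 (a b : ℝ) : EuclideanSpace ℝ (Fin 2) := WithLp.toLp 2 ![a, b]

@[simp] lemma mk2_zero (a b : ℝ) : mk2 a b 0 = a := rfl
@[simp] lemma mk2_one (a b : ℝ) : mk2 a b 1 = b := rfl

lemma mk2_eta (p : EuclideanSpace ℝ (Fin 2)) : mk2 (p 0) (p 1) = p := by
  apply PiLp.ext; intro i; fin_cases i <;> rfl

lemma mem_hypo {f : ℝ → ℝ} {a b : ℝ} :
    mk2 a b ∈ hypo f ↔ a ∈ Set.Icc (0:ℝ) 1 ∧ 0 ≤ b ∧ b ≤ f a := Iff.rfl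

lemma cont_mk2 : Continuous fun q : ℝ × ℝ => mk2 q.1 q.2 := by
  apply Continuous.comp (EuclideanSpace.equiv (Fin 2) ℝ).symm.continuous
  refine continuous_pi fun i => ?_
  fin_cases i
  · exact continuous_fst
  · exact continuous_snd

lemma tendsto_mk2 {u v : ℕ → ℝ} {a b : ℝ} (hu : Tendsto u atTop (nhds a))
    (hv : Tendsto v atTop (nhds b)) :
    Tendsto (fun n => mk2 (u n) (v n)) atTop (nhds (mk2 a b)) :=
  (cont_mk2.tendsto (a, b)).comp (hu.prodMk_nhds hv)

lemma tendsto_coord {q : ℕ → EuclideanSpace ℝ (Fin 2)} {p : EuclideanSpace ℝ (Fin 2)}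
    (h : Tendsto q atTop (nhds p)) (i : Fin 2) :
    Tendsto (fun n => q n i) atTop (nhds (p i)) :=
  ((EuclideanSpace.proj (𝕜 := ℝ) i).continuous.tendsto p).comp h

lemma hypo_bounded {f : ℝ → ℝ} {M : ℝ} (hM0 : 0 ≤ M)
    (hM : ∀ x ∈ Set.Icc (0:ℝ) 1, f x ≤ M) :
    Bornology.IsBounded (hypo f) := by
  refine (Metric.isBounded_closedBall (x := (0 : EuclideanSpace ℝ (Fin 2))) (r := 1 + M)).subset
    fun p hp => ?_
  obtain ⟨h1, h2, h3⟩ := hp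
  have hp1 : p 1 ≤ M := h3.trans (hM _ h1)
  have hd : dist p (0 : EuclideanSpace ℝ (Fin 2)) =
      Real.sqrt (dist (p 0) 0 ^ 2 + dist (p 1) 0 ^ 2) := by
    rw [EuclideanSpace.dist_eq]
    congr 1
    rw [Fin.sum_univ_two]
    rfl
  have h4 : dist (p 0) (0:ℝ) ≤ 1 := by
    rw [Real.dist_eq, sub_zero, abs_of_nonneg h1.1]; exact h1.2
  have h5 : dist (p 1) (0:ℝ) ≤ M := by
    rw [Real.dist_eq, sub_zero, abs_of_nonneg h2]; exact hp1
  have h6 : dist (p 0) (0:ℝ) ^ 2 + dist (p 1) 0 ^ 2 ≤ (1 + M) ^ 2 := by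
    have := dist_nonneg (x := p 0) (y := (0:ℝ))
    have := dist_nonneg (x := p 1) (y := (0:ℝ))
    nlinarith
  rw [mem_closedBall, hd]
  calc Real.sqrt (dist (p 0) 0 ^ 2 + dist (p 1) 0 ^ 2) ≤ Real.sqrt ((1 + M) ^ 2) :=
        Real.sqrt_le_sqrt h6
    _ = 1 + M := Real.sqrt_sq (by linarith)

/-- If the hypographs of a sequence of nonnegative bounded USC functions on
`[0,1]` converge in the Hausdorff metric to a compact set `C`, then `C` is the
hypograph of a nonnegative USC function `f`, given explicitly by
`f(x) = sup over sequences xₙ → x in [0,1] of limsup fₙ(xₙ)`. -/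
theorem stmt_9 (F : ℕ → ℝ → ℝ)
    (h0 : ∀ n, ∀ x ∈ Set.Icc (0:ℝ) 1, 0 ≤ F n x)
    (husc : ∀ n, UpperSemicontinuousOn (F n) (Set.Icc (0:ℝ) 1))
    (hbdd : ∃ M : ℝ, ∀ n, ∀ x ∈ Set.Icc (0:ℝ) 1, F n x ≤ M)
    (C : Set (EuclideanSpace ℝ (Fin 2))) (hC : IsCompact C) (hCne : C.Nonempty)
    (hconv : Filter.Tendsto (fun n => Metric.hausdorffDist (hypo (F n)) C)
      Filter.atTop (nhds 0)) :
    ∃ f : ℝ → ℝ,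
      (∀ x ∈ Set.Icc (0:ℝ) 1, 0 ≤ f x) ∧
      UpperSemicontinuousOn f (Set.Icc (0:ℝ) 1) ∧
      C = hypo f ∧
      (∀ x ∈ Set.Icc (0:ℝ) 1,
        f x = sSup {y : ℝ | ∃ u : ℕ → ℝ, (∀ n, u n ∈ Set.Icc (0:ℝ) 1) ∧
          Filter.Tendsto u Filter.atTop (nhds x) ∧
          y = Filter.limsup (fun n => F n (u n)) Filter.atTop}) := by
  obtain ⟨M, hM⟩ := hbdd
  set M' : ℝ := max M 0 with hM'def
  have hM' : ∀ n, ∀ x ∈ Set.Icc (0:ℝ) 1, F n x ≤ M' :=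
    fun n x hx => (hM n x hx).trans (le_max_left _ _)
  have hM'0 : (0:ℝ) ≤ M' := le_max_right _ _
  have hHne : ∀ n, (hypo (F n)).Nonempty := fun n =>
    ⟨mk2 0 0, mem_hypo.2 ⟨left_mem_Icc.2 zero_le_one, le_refl 0,
      h0 n 0 (left_mem_Icc.2 zero_le_one)⟩⟩
  have hHbdd : ∀ n, Bornology.IsBounded (hypo (F n)) := fun n =>
    hypo_bounded hM'0 (hM' n)
  have hedist : ∀ n, EMetric.hausdorffEdist (hypo (F n)) C ≠ ⊤ := fun n =>
    Metric.hausdorffEdist_ne_top_of_nonempty_of_bounded (hHne n) hCne (hHbdd n) hC.isBounded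
  -- approximation of points of C by points of the hypographs
  have approx : ∀ p ∈ C, ∃ q : ℕ → EuclideanSpace ℝ (Fin 2),
      (∀ n, q n ∈ hypo (F n)) ∧ Tendsto q atTop (nhds p) := by
    intro p hp
    have h1 : ∀ n : ℕ, ∃ z ∈ hypo (F n),
        dist p z < hausdorffDist (hypo (F n)) C + (1:ℝ)/(n+1) := by
      intro n
      have h2 : infDist p (hypo (F n)) ≤ hausdorffDist (hypo (F n)) C := by
        rw [hausdorffDist_comm]
        exact Metric.infDist_le_hausdorffDist_of_mem hp
          (by rw [EMetric.hausdorffEdist_comm]; exact hedist n)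
      have h3 : infDist p (hypo (F n)) < hausdorffDist (hypo (F n)) C + (1:ℝ)/(n+1) :=
        lt_of_le_of_lt h2 (lt_add_of_pos_right _ (by positivity))
      exact (Metric.infDist_lt_iff (hHne n)).1 h3
    choose q hq hdist using h1
    refine ⟨q, hq, tendsto_iff_dist_tendsto_zero.2 ?_⟩
    have hd0 : Tendsto (fun n : ℕ => hausdorffDist (hypo (F n)) C + (1:ℝ)/(n+1))
        atTop (nhds 0) := by
      have := hconv.add tendsto_one_div_add_atTop_nhds_zero_nat
      simpa using this
    refine squeeze_zero (fun n => dist_nonneg) (fun n => ?_) hd0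
    rw [dist_comm]; exact (hdist n).le
  -- limits of (frequently) points of the hypographs belong to C
  have memC : ∀ (p : EuclideanSpace ℝ (Fin 2)) (q : ℕ → EuclideanSpace ℝ (Fin 2)),
      (∃ᶠ n in atTop, q n ∈ hypo (F n)) → Tendsto q atTop (nhds p) → p ∈ C := by
    intro p q hfreq hlim
    have key : infDist p C = 0 := by
      by_contra hne
      have hpos : 0 < infDist p C := lt_of_le_of_ne infDist_nonneg (Ne.symm hne)
      have htend : Tendsto (fun n => dist p (q n) + hausdorffDist (hypo (F n)) C)
          atTop (nhds 0) := by
        have h1 : Tendsto (fun n => dist p (q n)) atTop (nhds 0) := by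
          have := tendsto_iff_dist_tendsto_zero.1 hlim
          simpa [dist_comm] using this
        simpa using h1.add hconv
      have hev := htend.eventually_lt_const hpos
      obtain ⟨n, hn1, hn2⟩ := (hfreq.and_eventually hev).exists
      have hle : infDist p C ≤ dist p (q n) + hausdorffDist (hypo (F n)) C := by
        calc infDist p C ≤ infDist (q n) C + dist p (q n) :=
              Metric.infDist_le_infDist_add_dist
          _ ≤ hausdorffDist (hypo (F n)) C + dist p (q n) := by
              gcongr
              exact Metric.infDist_le_hausdorffDist_of_mem hn1 (hedist n)
          _ = dist p (q n) + hausdorffDist (hypo (F n)) C := add_comm _ _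
      linarith
    exact (hC.isClosed.mem_iff_infDist_zero hCne).2 key
  -- structural facts about C
  have hCsub : ∀ p ∈ C, p 0 ∈ Set.Icc (0:ℝ) 1 ∧ 0 ≤ p 1 ∧ p 1 ≤ M' := by
    intro p hp
    obtain ⟨q, hq, hlim⟩ := approx p hp
    have h0' := tendsto_coord hlim 0
    have h1' := tendsto_coord hlim 1
    refine ⟨⟨?_, ?_⟩, ?_, ?_⟩
    · exact ge_of_tendsto h0' (Eventually.of_forall fun n => (hq n).1.1)
    · exact le_of_tendsto h0' (Eventually.of_forall fun n => (hq n).1.2)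
    · exact ge_of_tendsto h1' (Eventually.of_forall fun n => (hq n).2.1)
    · exact le_of_tendsto h1' (Eventually.of_forall fun n =>
        ((hq n).2.2.trans (hM' n _ (hq n).1)))
  have hzero : ∀ x ∈ Set.Icc (0:ℝ) 1, mk2 x 0 ∈ C := by
    intro x hx
    exact memC _ (fun _ => mk2 x 0)
      ((Eventually.of_forall fun n => mem_hypo.2 ⟨hx, le_refl 0, h0 n x hx⟩).frequently)
      tendsto_const_nhds
  have hdown : ∀ x y y', mk2 x y ∈ C → 0 ≤ y' → y' ≤ y → mk2 x y' ∈ C := by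
    intro x y y' hmem hy'0 hy'y
    obtain ⟨q, hq, hlim⟩ := approx _ hmem
    have h0' : Tendsto (fun n => q n 0) atTop (nhds x) := by
      simpa using tendsto_coord hlim 0
    have h1' : Tendsto (fun n => q n 1) atTop (nhds y) := by
      simpa using tendsto_coord hlim 1
    refine memC _ (fun n => mk2 (q n 0) (min (q n 1) y'))
      ((Eventually.of_forall fun n => ?_).frequently) ?_
    · exact mem_hypo.2 ⟨(hq n).1, le_min (hq n).2.1 hy'0,
        (min_le_left _ _).trans (hq n).2.2⟩
    · have htmin : Tendsto (fun n => mk2 (q n 0) (min (q n 1) y')) atTop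
          (nhds (mk2 x (min y y'))) := tendsto_mk2 h0' (h1'.min tendsto_const_nhds)
      simpa [min_eq_right hy'y] using htmin
  -- the sections of C and the candidate function f
  set S : ℝ → Set ℝ := fun x => {y | mk2 x y ∈ C} with hSdef
  set f : ℝ → ℝ := fun x => sSup (S x) with hfdef
  have hSsub : ∀ x, S x ⊆ Set.Icc 0 M' := fun x y hy =>
    ⟨(hCsub _ hy).2.1, (hCsub _ hy).2.2⟩
  have hSc : ∀ x, IsCompact (S x) := by
    intro x
    have hcl : IsClosed (S x) :=
      hC.isClosed.preimage (cont_mk2.comp (continuous_const.prodMk continuous_id))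
    exact isCompact_Icc.of_isClosed_subset hcl (hSsub x)
  have hbddS : ∀ x, BddAbove (S x) := fun x => ⟨M', fun y hy => (hSsub x hy).2⟩
  have hfmem : ∀ x ∈ Set.Icc (0:ℝ) 1, mk2 x (f x) ∈ C := fun x hx =>
    (hSc x).sSup_mem ⟨0, hzero x hx⟩
  have hfnn : ∀ x ∈ Set.Icc (0:ℝ) 1, 0 ≤ f x := fun x hx =>
    le_csSup (hbddS x) (hzero x hx)
  have hfle : ∀ x y, mk2 x y ∈ C → y ≤ f x := fun x y hy => le_csSup (hbddS x) hy
  -- C is the hypograph of f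
  have hChypo : C = hypo f := by
    ext p
    constructor
    · intro hp
      obtain ⟨h1, h2, _⟩ := hCsub p hp
      exact ⟨h1, h2, hfle _ _ (by rw [mk2_eta]; exact hp)⟩
    · rintro ⟨h1, h2, h3⟩
      have : mk2 (p 0) (p 1) ∈ C := hdown _ _ _ (hfmem _ h1) h2 h3
      rwa [mk2_eta] at this
  -- f is upper semicontinuous on [0,1]
  have huscf : UpperSemicontinuousOn f (Set.Icc (0:ℝ) 1) := by
    intro x hx y hy
    by_contra hcon
    have hfreq : ∃ᶠ x' in nhdsWithin x (Set.Icc (0:ℝ) 1), ¬ f x' < y :=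
      not_eventually.1 hcon
    have hfreq2 : ∃ᶠ x' in nhdsWithin x (Set.Icc (0:ℝ) 1),
        (¬ f x' < y) ∧ x' ∈ Set.Icc (0:ℝ) 1 :=
      hfreq.and_eventually self_mem_nhdsWithin
    obtain ⟨u, hu, hup⟩ := exists_seq_forall_of_frequently hfreq2
    have hux : Tendsto u atTop (nhds x) := hu.mono_right nhdsWithin_le_nhds
    have hy0 : 0 ≤ y := (hfnn x hx).trans hy.le
    have hmem : ∀ n, mk2 (u n) y ∈ C := fun n =>
      hdown _ _ _ (hfmem _ (hup n).2) hy0 (not_lt.1 (hup n).1)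
    have hxy : mk2 x y ∈ C := hC.isClosed.mem_of_tendsto
      (tendsto_mk2 hux tendsto_const_nhds) (Eventually.of_forall hmem)
    exact absurd (hfle _ _ hxy) (not_le.2 hy)
  refine ⟨f, hfnn, huscf, hChypo, ?_⟩
  -- the explicit formula
  intro x hx
  have hii : ∀ u : ℕ → ℝ, (∀ n, u n ∈ Set.Icc (0:ℝ) 1) → Tendsto u atTop (nhds x) →
      limsup (fun n => F n (u n)) atTop ≤ f x := by
    intro u hu hux
    by_contra hcon
    push_neg at hcon
    set L := limsup (fun n => F n (u n)) atTop with hL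
    set c := (f x + L) / 2 with hc
    have hc1 : f x < c := by simp only [hc]; linarith
    have hc2 : c < L := by simp only [hc]; linarith
    have hcob : IsCoboundedUnder (· ≤ ·) atTop (fun n => F n (u n)) :=
      (isBoundedUnder_of (α := ℝ) ⟨0, fun n => h0 n (u n) (hu n)⟩ :
        IsBoundedUnder (· ≥ ·) atTop _).isCoboundedUnder_le
    have hfr : ∃ᶠ n in atTop, c < F n (u n) := frequently_lt_of_lt_limsup hcob hc2
    have hc0 : 0 ≤ c := (hfnn x hx).trans hc1.le
    have hxc : mk2 x c ∈ C :=
      memC _ (fun n => mk2 (u n) c)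
        (hfr.mono fun n hn => mem_hypo.2 ⟨hu n, hc0, hn.le⟩)
        (tendsto_mk2 hux tendsto_const_nhds)
    exact absurd (hfle _ _ hxc) (not_le.2 hc1)
  obtain ⟨q, hq, hlim⟩ := approx _ (hfmem x hx)
  set u : ℕ → ℝ := fun n => q n 0 with hudef
  have hu : ∀ n, u n ∈ Set.Icc (0:ℝ) 1 := fun n => (hq n).1
  have hux : Tendsto u atTop (nhds x) := by simpa using tendsto_coord hlim 0
  have h1' : Tendsto (fun n => q n 1) atTop (nhds (f x)) := by
    simpa using tendsto_coord hlim 1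
  have hbddu : IsBoundedUnder (· ≤ ·) atTop (fun n => F n (u n)) :=
    isBoundedUnder_of ⟨M', fun n => hM' n (u n) (hu n)⟩
  have hgelim : f x ≤ limsup (fun n => F n (u n)) atTop := by
    have := limsup_le_limsup (Eventually.of_forall fun n => (hq n).2.2)
      (h1'.isBoundedUnder_ge.isCoboundedUnder_le) hbddu
    rwa [h1'.limsup_eq] at this
  have heq : limsup (fun n => F n (u n)) atTop = f x :=
    le_antisymm (hii u hu hux) hgelim
  have hTne : f x ∈ {y : ℝ | ∃ u : ℕ → ℝ, (∀ n, u n ∈ Set.Icc (0:ℝ) 1) ∧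
      Tendsto u atTop (nhds x) ∧ y = limsup (fun n => F n (u n)) atTop} :=
    ⟨u, hu, hux, heq.symm⟩
  have hTbdd : ∀ y ∈ {y : ℝ | ∃ u : ℕ → ℝ, (∀ n, u n ∈ Set.Icc (0:ℝ) 1) ∧
      Tendsto u atTop (nhds x) ∧ y = limsup (fun n => F n (u n)) atTop}, y ≤ f x := by
    rintro y ⟨v, hv, hvx, rfl⟩
    exact hii v hv hvx
  exact le_antisymm (le_csSup ⟨f x, hTbdd⟩ hTne) (csSup_le ⟨f x, hTne⟩ hTbdd)
end

section
/- The metric space (𝓔, ℍ) of nonnegative USC functions on [0,1] with hypograph Hausdorff distance is complete. -/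
open Set Metric Filter

noncomputable def HH (f g : ℝ → ℝ) : ℝ := Metric.hausdorffDist (hypo f) (hypo g)

def memE (f : ℝ → ℝ) : Prop :=
  (∀ x ∈ Set.Icc (0:ℝ) 1, 0 ≤ f x) ∧ UpperSemicontinuousOn f (Set.Icc (0:ℝ) 1)

noncomputable def pt (x y : ℝ) : EuclideanSpace ℝ (Fin 2) := WithLp.toLp 2 ![x, y]

lemma pt_eq (p : EuclideanSpace ℝ (Fin 2)) : pt (p 0) (p 1) = p := by
  ext i; fin_cases i <;> rfl

lemma dist_pt (a b c d : ℝ) : dist (pt a b) (pt c d) = Real.sqrt ((a-c)^2 + (b-d)^2) := by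
  rw [EuclideanSpace.dist_eq]
  simp [pt, Fin.sum_univ_two, Real.dist_eq, sq_abs]

lemma isometry_pt (x : ℝ) : Isometry (fun y => pt x y) := by
  apply Isometry.of_dist_eq
  intro a b
  simp [dist_pt, Real.dist_eq, Real.sqrt_sq_eq_abs]

lemma mem_hypo_pt {f : ℝ → ℝ} {x y : ℝ} :
    pt x y ∈ hypo f ↔ x ∈ Set.Icc (0:ℝ) 1 ∧ 0 ≤ y ∧ y ≤ f x := Iff.rfl

lemma bddAbove_of_usc {f : ℝ → ℝ} (hf : UpperSemicontinuousOn f (Set.Icc (0:ℝ) 1)) :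
    BddAbove (f '' Set.Icc (0:ℝ) 1) := by
  have hc : IsCompact (Set.Icc (0:ℝ) 1) := isCompact_Icc
  refine hc.induction_on (p := fun t => BddAbove (f '' t)) (by simp) ?_ ?_ ?_
  · intro s t hst h
    exact h.mono (Set.image_mono hst)
  · intro s t hs ht
    rw [Set.image_union]; exact hs.union ht
  · intro x hx
    refine ⟨{x' ∈ Set.Icc (0:ℝ) 1 | f x' < f x + 1}, ?_, ⟨f x + 1, ?_⟩⟩
    · exact inter_mem self_mem_nhdsWithin (hf x hx (f x + 1) (lt_add_one _))
    · rintro y ⟨x', hx', rfl⟩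
      exact le_of_lt hx'.2

lemma isClosed_hypo {f : ℝ → ℝ} (hf : memE f) : IsClosed (hypo f) := by
  rw [← isSeqClosed_iff_isClosed]
  intro u p hu hup
  have h0 : Tendsto (fun n => u n 0) atTop (nhds (p 0)) :=
    (((continuous_apply (0 : Fin 2)).comp (PiLp.continuous_ofLp ..)).continuousAt.tendsto.comp hup)
  have h1 : Tendsto (fun n => u n 1) atTop (nhds (p 1)) :=
    (((continuous_apply (1 : Fin 2)).comp (PiLp.continuous_ofLp ..)).continuousAt.tendsto.comp hup)
  have hp0 : p 0 ∈ Set.Icc (0:ℝ) 1 :=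
    isClosed_Icc.mem_of_tendsto h0 (Eventually.of_forall fun n => (hu n).1)
  refine ⟨hp0, le_of_tendsto_of_tendsto tendsto_const_nhds h1
    (Eventually.of_forall fun n => (hu n).2.1), ?_⟩
  refine le_of_forall_gt_imp_ge_of_dense fun y hy => ?_
  have hev := hf.2 (p 0) hp0 y hy
  have h0' : Tendsto (fun n => u n 0) atTop (nhdsWithin (p 0) (Set.Icc (0:ℝ) 1)) := by
    exact tendsto_nhdsWithin_of_tendsto_nhds_of_eventually_within _ h0
      (Eventually.of_forall fun n => (hu n).1)
  have := (h0'.eventually hev)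
  refine le_of_tendsto h1 (this.mono fun n hn => le_of_lt (lt_of_le_of_lt (hu n).2.2 hn))

lemma hypo_nonempty {f : ℝ → ℝ} (hf : memE f) : (hypo f).Nonempty := by
  refine ⟨pt 0 0, ?_⟩
  rw [mem_hypo_pt]
  exact ⟨⟨le_refl _, zero_le_one⟩, le_refl _, hf.1 0 ⟨le_refl _, zero_le_one⟩⟩

lemma isCompact_hypo {f : ℝ → ℝ} (hf : memE f) : IsCompact (hypo f) := by
  obtain ⟨M, hM⟩ := bddAbove_of_usc hf.2
  apply Metric.isCompact_of_isClosed_isBounded (isClosed_hypo hf)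
  rw [isBounded_iff_forall_norm_le]
  refine ⟨Real.sqrt (1 + max M 0 ^ 2), fun p hp => ?_⟩
  rw [EuclideanSpace.norm_eq]
  apply Real.sqrt_le_sqrt
  rw [Fin.sum_univ_two]
  have h1 : p 0 ∈ Set.Icc (0:ℝ) 1 := hp.1
  have h2 : 0 ≤ p 1 := hp.2.1
  have h3 : p 1 ≤ max M 0 := le_trans hp.2.2 (le_trans (hM ⟨p 0, h1, rfl⟩) (le_max_left _ _))
  have := h1.1; have := h1.2
  simp only [Real.norm_eq_abs, sq_abs]
  nlinarith

/-- Completeness of `(𝓔, ℍ)`: every `ℍ`-Cauchy sequence of nonnegative USC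
functions on `[0,1]` converges in `ℍ` to a nonnegative USC function. -/
theorem stmt_10 (F : ℕ → ℝ → ℝ) (hF : ∀ n, memE (F n))
    (hcauchy : ∀ ε : ℝ, 0 < ε → ∃ N : ℕ, ∀ m ≥ N, ∀ n ≥ N, HH (F m) (F n) < ε) :
    ∃ f : ℝ → ℝ, memE f ∧
      Filter.Tendsto (fun n => HH (F n) f) Filter.atTop (nhds 0) := by
  classical
  set Kc : ℕ → TopologicalSpace.NonemptyCompacts (EuclideanSpace ℝ (Fin 2)) :=
    fun n => ⟨⟨hypo (F n), isCompact_hypo (hF n)⟩, hypo_nonempty (hF n)⟩ with hKcdef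
  have hKcoe : ∀ n, (Kc n : Set (EuclideanSpace ℝ (Fin 2))) = hypo (F n) := fun n => rfl
  have hcs : CauchySeq Kc := by
    rw [Metric.cauchySeq_iff]
    intro ε hε
    obtain ⟨N, hN⟩ := hcauchy ε hε
    exact ⟨N, fun m hm n hn => hN m hm n hn⟩
  obtain ⟨L, hL⟩ := cauchySeq_tendsto_of_complete hcs
  set K : Set (EuclideanSpace ℝ (Fin 2)) := (L : Set (EuclideanSpace ℝ (Fin 2))) with hKdef
  have hKco : IsCompact K := L.isCompact
  have hKcl : IsClosed K := hKco.isClosed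
  have hKne : K.Nonempty := L.nonempty
  set d : ℕ → ℝ := fun n => dist (Kc n) L with hddef
  have hd : Tendsto d atTop (nhds 0) := tendsto_iff_dist_tendsto_zero.1 hL
  have hdist : ∀ n, hausdorffDist (hypo (F n)) K = d n := fun n => rfl
  have hfin : ∀ n, EMetric.hausdorffEdist (hypo (F n)) K ≠ ⊤ := fun n =>
    hausdorffEdist_ne_top_of_nonempty_of_bounded (hypo_nonempty (hF n)) hKne
      (isCompact_hypo (hF n)).isBounded hKco.isBounded
  -- membership criterion for K
  have hKmem : ∀ (p : EuclideanSpace ℝ (Fin 2)) (c : ℕ → ℝ),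
      (∀ n, infDist p (hypo (F n)) ≤ c n) → Tendsto c atTop (nhds 0) → p ∈ K := by
    intro p c hc hc0
    rw [hKcl.mem_iff_infDist_zero hKne]
    refine le_antisymm ?_ infDist_nonneg
    have h1 : ∀ n, infDist p K ≤ c n + d n := fun n =>
      calc infDist p K ≤ infDist p (hypo (F n)) + hausdorffDist (hypo (F n)) K :=
            infDist_le_infDist_add_hausdorffDist (hfin n)
        _ ≤ c n + d n := add_le_add (hc n) (le_of_eq (hdist n))
    have h2 : Tendsto (fun n => c n + d n) atTop (nhds 0) := by
      simpa using hc0.add hd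
    exact ge_of_tendsto' h2 h1
  -- points of K are close to the hypographs
  have hA : ∀ p ∈ K, ∀ n, infDist p (hypo (F n)) ≤ d n := by
    intro p hp n
    have hfin' : EMetric.hausdorffEdist K (hypo (F n)) ≠ ⊤ := by
      exact (Metric.hausdorffEDist_comm (s := K) (t := hypo (F n))).trans_ne (hfin n)
    have := infDist_le_hausdorffDist_of_mem hp hfin'
    rwa [hausdorffDist_comm, hdist n] at this
  -- base points
  have hd0 : ∀ n, 0 ≤ d n := fun n => dist_nonneg
  have hbase : ∀ x ∈ Set.Icc (0:ℝ) 1, pt x 0 ∈ K := by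
    intro x hx
    refine hKmem _ d (fun n => ?_) hd
    have hm : pt x 0 ∈ hypo (F n) := mem_hypo_pt.mpr ⟨hx, le_refl _, (hF n).1 x hx⟩
    rw [infDist_zero_of_mem hm]; exact hd0 n
  -- downward (scaling) closedness of K
  have hscale : ∀ p ∈ K, ∀ t : ℝ, 0 ≤ t → t ≤ 1 → pt (p 0) (t * p 1) ∈ K := by
    intro p hp t ht0 ht1
    refine hKmem _ d (fun n => ?_) hd
    obtain ⟨q, hq, hq'⟩ := (isCompact_hypo (hF n)).exists_infDist_eq_dist
      (hypo_nonempty (hF n)) p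
    have hq2 : pt (q 0) (t * q 1) ∈ hypo (F n) := mem_hypo_pt.mpr
      ⟨hq.1, mul_nonneg ht0 hq.2.1, le_trans (by nlinarith [hq.2.1]) hq.2.2⟩
    calc infDist (pt (p 0) (t * p 1)) (hypo (F n))
        ≤ dist (pt (p 0) (t * p 1)) (pt (q 0) (t * q 1)) := infDist_le_dist_of_mem hq2
      _ ≤ dist p q := by
          conv_rhs => rw [← pt_eq p, ← pt_eq q]
          rw [dist_pt, dist_pt]
          apply Real.sqrt_le_sqrt
          have ht2 : t^2 ≤ 1 := by nlinarith
          have heq : (t * p 1 - t * q 1)^2 = t^2 * (p 1 - q 1)^2 := by ring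
          nlinarith [sq_nonneg (p 1 - q 1)]
      _ = infDist p (hypo (F n)) := hq'.symm
      _ ≤ d n := hA p hp n
  -- K lies in the strip [0,1] × [0,∞)
  have hstrip : ∀ p ∈ K, p 0 ∈ Set.Icc (0:ℝ) 1 ∧ 0 ≤ p 1 := by
    intro p hp
    set B : Set (EuclideanSpace ℝ (Fin 2)) :=
      {q | q 0 ∈ Set.Icc (0:ℝ) 1 ∧ 0 ≤ q 1} with hBdef
    have hBcl : IsClosed B := by
      apply IsClosed.inter
      · exact isClosed_Icc.preimage ((continuous_apply (0 : Fin 2)).comp (PiLp.continuous_ofLp ..))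
      · exact isClosed_le continuous_const ((continuous_apply (1 : Fin 2)).comp (PiLp.continuous_ofLp ..))
    have hBsub : ∀ n, hypo (F n) ⊆ B := fun n q hq => ⟨hq.1, hq.2.1⟩
    have h1 : ∀ n, infDist p B ≤ d n := fun n =>
      le_trans (infDist_le_infDist_of_subset (hBsub n) (hypo_nonempty (hF n))) (hA p hp n)
    have h2 : infDist p B = 0 :=
      le_antisymm (ge_of_tendsto' hd h1) infDist_nonneg
    have hBne : B.Nonempty := ⟨pt 0 0, ⟨⟨le_refl _, zero_le_one⟩, le_refl _⟩⟩
    exact (hBcl.mem_iff_infDist_zero hBne).mpr h2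
  -- slices and the limit function
  set S : ℝ → Set ℝ := fun x => {y | pt x y ∈ K} with hSdef
  have hSclosed : ∀ x, IsClosed (S x) := fun x =>
    hKcl.preimage (isometry_pt x).continuous
  have hSbdd : ∀ x, BddAbove (S x) := by
    obtain ⟨R, hR⟩ := isBounded_iff_forall_norm_le.1 hKco.isBounded
    intro x
    refine ⟨R, fun y hy => ?_⟩
    have h1 : ‖pt x y‖ ≤ R := hR _ hy
    have h2 : |y| ≤ ‖pt x y‖ := by
      rw [EuclideanSpace.norm_eq, Fin.sum_univ_two]
      rw [show (pt x y 0) = x from rfl, show (pt x y 1) = y from rfl]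
      rw [← Real.sqrt_sq_eq_abs]
      apply Real.sqrt_le_sqrt
      simp only [Real.norm_eq_abs, sq_abs]
      nlinarith [sq_nonneg x]
    exact le_trans (le_trans (le_abs_self y) h2) h1
  have hS0 : ∀ x ∈ Set.Icc (0:ℝ) 1, (0:ℝ) ∈ S x := fun x hx => hbase x hx
  set f : ℝ → ℝ := fun x => sSup (S x) with hfdef
  have hfmem : ∀ x ∈ Set.Icc (0:ℝ) 1, pt x (f x) ∈ K := fun x hx =>
    (hSclosed x).csSup_mem ⟨0, hS0 x hx⟩ (hSbdd x)
  have hf0 : ∀ x ∈ Set.Icc (0:ℝ) 1, 0 ≤ f x := fun x hx => le_csSup (hSbdd x) (hS0 x hx)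
  -- hypo f = K
  have hEq : hypo f = K := by
    apply Set.Subset.antisymm
    · rintro p ⟨hp0, hp1, hp2⟩
      by_cases hz : f (p 0) = 0
      · have hzz : p 1 = 0 := le_antisymm (hz ▸ hp2) hp1
        rw [← pt_eq p, hzz]
        exact hbase _ hp0
      · have hfp : 0 < f (p 0) := lt_of_le_of_ne (hf0 _ hp0) (Ne.symm hz)
        have := hscale (pt (p 0) (f (p 0))) (hfmem _ hp0) (p 1 / f (p 0))
          (div_nonneg hp1 hfp.le) ((div_le_one hfp).mpr hp2)
        rw [show (pt (p 0) (f (p 0))) 0 = p 0 from rfl,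
          show (pt (p 0) (f (p 0))) 1 = f (p 0) from rfl,
          div_mul_cancel₀ _ hz, pt_eq] at this
        exact this
    · intro p hp
      obtain ⟨hp0, hp1⟩ := hstrip p hp
      have hps : p 1 ∈ S (p 0) := by
        rw [hSdef]; simp only [Set.mem_setOf_eq, pt_eq]; exact hp
      exact ⟨hp0, hp1, le_csSup (hSbdd (p 0)) hps⟩
  -- upper semicontinuity of f
  have husc : UpperSemicontinuousOn f (Set.Icc (0:ℝ) 1) := by
    intro x hx y hy
    have hyK : pt x y ∉ K := fun h => absurd (le_csSup (hSbdd x) h) (not_le.mpr hy)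
    obtain ⟨ε, hε, hball⟩ := Metric.isOpen_iff.1 hKcl.isOpen_compl _ hyK
    have hmem : {x' : ℝ | dist x' x < ε} ∈ nhdsWithin x (Set.Icc (0:ℝ) 1) :=
      mem_nhdsWithin_of_mem_nhds (Metric.ball_mem_nhds x hε)
    filter_upwards [hmem, self_mem_nhdsWithin] with x' hx' hx'I
    by_contra h
    push_neg at h
    have hy0 : 0 < y := lt_of_le_of_lt (hf0 x hx) hy
    have hfx' : 0 < f x' := lt_of_lt_of_le hy0 h
    have hKm := hscale (pt x' (f x')) (hfmem x' hx'I) (y / f x')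
      (div_nonneg hy0.le hfx'.le) ((div_le_one hfx').mpr h)
    rw [show (pt x' (f x')) 0 = x' from rfl, show (pt x' (f x')) 1 = f x' from rfl,
      div_mul_cancel₀ _ (ne_of_gt hfx')] at hKm
    apply hball _ hKm
    rw [Metric.mem_ball, dist_pt]
    simpa [Real.sqrt_sq_eq_abs, Real.dist_eq] using hx'
  refine ⟨f, ⟨hf0, husc⟩, ?_⟩
  have hHH : ∀ n, HH (F n) f = d n := fun n => by
    rw [HH, hEq]; exact hdist n
  simpa only [hHH] using hd
end
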